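/- Let κ be a cardinal with ω ≤ κ ≤ 𝔠 and S a subgroup of the compact Boolean group C = ℤ(2)^κ with |S| < 𝔠. Then C contains a countable dense independent subset X such that the subgroup generated by X meets S only in the identity. -/

import Mathlib

open Set

instance : TopologicalSpace (ZMod 2) := ⊥
instance : DiscreteTopology (ZMod 2) := ⟨rfl⟩

/-- A subset `X` of a Boolean group is independent if the sum of any finite subset of `X`
being zero forces all of its elements to be zero. -/
def BooleanIndependent {ι : Type*} (X : Set (ι → ZMod 2)) : Prop :=
  ∀ t : Finset (ι → ZMod 2), ↑t ⊆ X → ∑ x ∈ t, x = 0 → ∀ x ∈ t, x = 0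

attribute [local instance] Classical.propDecidable

/-- A "condition": a finite list of rational intervals with prescribed values. -/
abbrev Cond := List (ℚ × ℚ × ZMod 2)

/-- Value prescribed by a condition at a real number (first matching interval wins). -/
noncomputable def condVal : Cond → ℝ → ZMod 2
  | [], _ => 0
  | p :: c, r => if ((p.1 : ℝ) < r ∧ r < (p.2.1 : ℝ)) then p.2.2 else condVal c r

/-- A real number is constrained by a condition. -/
def condHits (c : Cond) (r : ℝ) : Prop := ∃ p ∈ c, ((p.1 : ℝ) < r ∧ r < (p.2.1 : ℝ))

/-- An upper bound for the reals constrained by a condition. -/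
noncomputable def maxB (c : Cond) : ℝ := (c.map fun p => ((p.2.1 : ℚ) : ℝ)).foldr max 0

lemma lt_maxB {c : Cond} {r : ℝ} (h : condHits c r) : r < maxB c := by
  induction c with
  | nil => obtain ⟨p, hp, _⟩ := h; simp at hp
  | cons p c ih =>
    obtain ⟨p', hp', h1, h2⟩ := h
    rcases List.mem_cons.mp hp' with rfl | hp'
    · exact lt_of_lt_of_le h2 (le_max_left _ _)
    · exact lt_of_lt_of_le (ih ⟨p', hp', h1, h2⟩) (le_max_right _ _)

lemma exists_not_mem_range {β γ : Type u} (h : Cardinal.mk β < Cardinal.mk γ) (f : β → γ) :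
    ∃ v, ∀ b, f b ≠ v := by
  by_contra hc
  push_neg at hc
  exact absurd (Cardinal.mk_le_of_surjective (f := f) fun v => hc v) (not_le.mpr h)

/-- Given a finite set of coordinates, there is a condition prescribing the desired values
at those coordinates (using disjoint small rational intervals around the images). -/
lemma exists_cond {ι : Type} (e : ι → ℝ) (he : Function.Injective e)
    (f : ι → ZMod 2) (I : Finset ι) :
    ∃ c : Cond, ∀ i ∈ I, condHits c (e i) ∧ condVal c (e i) = f i := by
  classical
  induction I using Finset.induction with
  | empty => exact ⟨[], by simp⟩
  | @insert i I hiI ih =>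
    obtain ⟨c, hc⟩ := ih
    set L : Finset ℝ := insert (e i - 1) ((I.image e).filter (· < e i)) with hL
    have hLne : L.Nonempty := ⟨e i - 1, Finset.mem_insert_self _ _⟩
    have hLlt : L.max' hLne < e i := by
      rcases Finset.mem_insert.mp (L.max'_mem hLne) with h | h
      · rw [h]; linarith
      · exact (Finset.mem_filter.mp h).2
    obtain ⟨a, ha1, ha2⟩ := exists_rat_btwn hLlt
    set U : Finset ℝ := insert (e i + 1) ((I.image e).filter (e i < ·)) with hU
    have hUne : U.Nonempty := ⟨e i + 1, Finset.mem_insert_self _ _⟩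
    have hUgt : e i < U.min' hUne := by
      rw [Finset.lt_min'_iff]
      intro y hy
      rcases Finset.mem_insert.mp hy with h | h
      · rw [h]; linarith
      · exact (Finset.mem_filter.mp h).2
    obtain ⟨b, hb1, hb2⟩ := exists_rat_btwn hUgt
    refine ⟨(a, b, f i) :: c, ?_⟩
    intro j hj
    rcases Finset.mem_insert.mp hj with rfl | hj
    · refine ⟨⟨(a, b, f j), List.mem_cons_self, ha2, hb1⟩, ?_⟩
      rw [condVal, if_pos ⟨ha2, hb1⟩]
    · have hne : e j ≠ e i := fun h => hiI (by rwa [he h] at hj)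
      have hout : ¬ ((a : ℝ) < e j ∧ e j < (b : ℝ)) := by
        rcases lt_or_gt_of_ne hne with h | h
        · rintro ⟨h1, -⟩
          have hmem : e j ∈ L := Finset.mem_insert_of_mem
            (Finset.mem_filter.mpr ⟨Finset.mem_image_of_mem e hj, h⟩)
          have := Finset.le_max' L (e j) hmem
          linarith
        · rintro ⟨-, h2⟩
          have hmem : e j ∈ U := Finset.mem_insert_of_mem
            (Finset.mem_filter.mpr ⟨Finset.mem_image_of_mem e hj, h⟩)
          have := Finset.min'_le U (e j) hmem
          linarith
      obtain ⟨⟨p, hp, hpp⟩, hv⟩ := hc j hj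
      exact ⟨⟨p, List.mem_cons_of_mem _ hp, hpp⟩, by rw [condVal, if_neg hout]; exact hv⟩

section Aux

variable {ι : Type} (g : ℕ ↪ ι) (pe : ℕ ≃ ℕ × ℕ)

/-- The coordinate of slot `(n, k)`. -/
def Gc (n k : ℕ) : ι := g (pe.symm (n, k))

/-- The perturbation supported on the `n`-th block of coordinates. -/
noncomputable def zf (w : ℕ → ℕ → ZMod 2) (n : ℕ) : ι → ZMod 2 := fun i =>
  if h : ∃ m, g m = i then (if (pe h.choose).1 = n then w n (pe h.choose).2 else 0) else 0

lemma zf_apply (w : ℕ → ℕ → ZMod 2) (n n' k : ℕ) :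
    zf g pe w n (Gc g pe n' k) = if n' = n then w n k else 0 := by
  have h : ∃ m, g m = Gc g pe n' k := ⟨pe.symm (n', k), rfl⟩
  simp only [zf, dif_pos h]
  have hm : h.choose = pe.symm (n', k) := g.injective h.choose_spec
  rw [hm, Equiv.apply_symm_apply]

lemma zf_apply_not_mem (w : ℕ → ℕ → ZMod 2) (n : ℕ) {i : ι} (hi : ∀ m, g m ≠ i) :
    zf g pe w n i = 0 := by
  simp only [zf]
  exact dif_neg (not_exists.mpr hi)

end Aux

/-- If `S` is a subgroup of `ℤ(2)^κ` (with `ω ≤ κ ≤ 𝔠`) of cardinality `< 𝔠`, then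
`ℤ(2)^κ` has a countable dense independent subset `X` whose generated subgroup meets
`S` only in the identity. -/
theorem dense_independent_avoiding_small_subgroup
    (ι : Type) [Infinite ι] (hκ : Cardinal.mk ι ≤ Cardinal.continuum)
    (S : AddSubgroup (ι → ZMod 2)) (hS : Cardinal.mk S < Cardinal.continuum) :
    ∃ X : Set (ι → ZMod 2), X.Countable ∧ Dense X ∧ BooleanIndependent X ∧
      ∀ x ∈ AddSubgroup.closure X, x ∈ S → x = 0 := by
  classical
  obtain ⟨u⟩ : Nonempty (ι ↪ ℝ) := (Cardinal.le_def ι ℝ).mp (by rwa [Cardinal.mk_real])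
  set g : ℕ ↪ ι := Infinite.natEmbedding ι with hg
  set pe : ℕ ≃ ℕ × ℕ := (Denumerable.eqv (ℕ × ℕ)).symm with hpe
  set e : ι → ℝ := fun i => if h : ∃ n, g n = i then ((h.choose : ℝ) + 10)
    else Real.arctan (u i) with he'
  have e_g : ∀ n, e (g n) = (n : ℝ) + 10 := by
    intro n
    have h : ∃ m, g m = g n := ⟨n, rfl⟩
    have h2 : h.choose = n := g.injective h.choose_spec
    simp only [he', dif_pos h, h2]
  have e_arctan : ∀ i, (∀ m, g m ≠ i) → e i = Real.arctan (u i) := by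
    intro i hi
    simp only [he']
    exact dif_neg (not_exists.mpr hi)
  have arctan_lt : ∀ r : ℝ, Real.arctan r < 2 := fun r =>
    lt_of_lt_of_le (Real.arctan_lt_pi_div_two r) (by have := Real.pi_lt_d2; linarith)
  have he : Function.Injective e := by
    intro i j hij
    by_cases hi : ∃ m, g m = i <;> by_cases hj : ∃ m, g m = j
    · obtain ⟨m, rfl⟩ := hi; obtain ⟨m', rfl⟩ := hj
      rw [e_g, e_g] at hij
      congr 1
      exact_mod_cast (by linarith : (m : ℝ) = m')
    · obtain ⟨m, rfl⟩ := hi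
      rw [e_g, e_arctan j (not_exists.mp hj)] at hij
      have h1 := arctan_lt (u j)
      have h2 : (0 : ℝ) ≤ m := Nat.cast_nonneg m
      linarith
    · obtain ⟨m, rfl⟩ := hj
      rw [e_g, e_arctan i (not_exists.mp hi)] at hij
      have h1 := arctan_lt (u i)
      have h2 : (0 : ℝ) ≤ m := Nat.cast_nonneg m
      linarith
    · rw [e_arctan i (not_exists.mp hi), e_arctan j (not_exists.mp hj)] at hij
      exact u.injective (Real.arctan_injective hij)
  obtain ⟨cseq, hcseq⟩ := exists_surjective_nat Cond
  set q : ℕ → ι → ZMod 2 := fun n i => condVal (cseq n) (e i) with hq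
  set K : ℕ → Set ℕ := fun n => {k | ¬ condHits (cseq n) (e (Gc g pe n k))} with hK
  have hKinf : ∀ n, (K n).Infinite := by
    intro n
    have hsub : (K n)ᶜ ⊆ (fun k => pe.symm (n, k)) ⁻¹' (Set.Iio ⌈maxB (cseq n)⌉₊) := by
      intro k hk
      simp only [hK, Set.mem_compl_iff, Set.mem_setOf_eq, not_not] at hk
      have h1 := lt_maxB hk
      rw [show Gc g pe n k = g (pe.symm (n, k)) from rfl, e_g] at h1
      simp only [Set.mem_preimage, Set.mem_Iio]
      exact Nat.lt_ceil.mpr (by linarith)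
    have hinj : Function.Injective (fun k : ℕ => pe.symm (n, k)) := by
      intro a b hab
      simpa using pe.symm.injective hab
    have hfin : ((fun k : ℕ => pe.symm (n, k)) ⁻¹' (Set.Iio ⌈maxB (cseq n)⌉₊)).Finite :=
      Set.Finite.preimage hinj.injOn (Set.finite_Iio _)
    have := (hfin.subset hsub).infinite_compl
    simpa using this
  have hcard : ∀ n : ℕ, Cardinal.mk (↥S × Finset ℕ) < Cardinal.mk (↥(K n) → ZMod 2) := by
    intro n
    have h1 : Cardinal.mk (↥S × Finset ℕ) < Cardinal.continuum := by
      rw [Cardinal.mk_prod]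
      simp only [Cardinal.lift_id]
      exact Cardinal.mul_lt_of_lt Cardinal.aleph0_le_continuum hS
        (lt_of_le_of_lt Cardinal.mk_le_aleph0 Cardinal.aleph0_lt_continuum)
    have h2 : Cardinal.mk (↥(K n) → ZMod 2) = Cardinal.continuum := by
      haveI : Infinite ↥(K n) := (hKinf n).to_subtype
      rw [← Cardinal.power_def]
      have hk : Cardinal.mk ↥(K n) = Cardinal.aleph0 :=
        le_antisymm Cardinal.mk_le_aleph0 (Cardinal.aleph0_le_mk _)
      have h2' : Cardinal.mk (ZMod 2) = 2 := by
        rw [Cardinal.mk_fintype]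
        norm_num
      rw [hk, h2', Cardinal.two_power_aleph0]
    rw [h2]; exact h1
  have hvex : ∀ n, ∃ v : ↥(K n) → ZMod 2, ∀ p : ↥S × Finset ℕ,
      (fun k : ↥(K n) => (p.1 : ι → ZMod 2) (Gc g pe n k.1) -
        ∑ m ∈ p.2, q m (Gc g pe n k.1)) ≠ v :=
    fun n => exists_not_mem_range (hcard n) _
  choose v hv using hvex
  set w : ℕ → ℕ → ZMod 2 := fun n k => if h : k ∈ K n then v n ⟨k, h⟩ else 0 with hw
  set z : ℕ → ι → ZMod 2 := fun n => zf g pe w n with hz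
  set x : ℕ → ι → ZMod 2 := fun n => q n + z n with hx
  -- Main claim: no nonempty finite subset of `range x` sums into `S`.
  have claim : ∀ t : Finset (ι → ZMod 2), ↑t ⊆ Set.range x → t.Nonempty →
      ∑ y ∈ t, y ∉ S := by
    rintro t ht ⟨y₀, hy₀⟩ hs
    set sel : {y // y ∈ t} → ℕ := fun y => (ht y.2).choose with hsel
    have hselx : ∀ y : {y // y ∈ t}, x (sel y) = y.1 := fun y => (ht y.2).choose_spec
    set T : Finset ℕ := t.attach.image sel with hT
    have hsum : ∑ n ∈ T, x n = ∑ y ∈ t, y := by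
      rw [hT, Finset.sum_image (by
        intro a _ b _ hab
        exact Subtype.ext (by rw [← hselx a, ← hselx b, hab]))]
      calc ∑ y ∈ t.attach, x (sel y) = ∑ y ∈ t.attach, y.1 :=
            Finset.sum_congr rfl (fun y _ => hselx y)
        _ = ∑ y ∈ t, y := Finset.sum_attach t (fun y => y)
    set n₀ : ℕ := sel ⟨y₀, hy₀⟩ with hn₀
    have hn₀T : n₀ ∈ T := Finset.mem_image_of_mem sel (Finset.mem_attach t _)
    have key : (fun k : ↥(K n₀) => (((⟨∑ y ∈ t, y, hs⟩ : S) : ι → ZMod 2)) (Gc g pe n₀ k.1) -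
        ∑ m ∈ T, q m (Gc g pe n₀ k.1)) = v n₀ := by
      funext k
      obtain ⟨k, hk⟩ := k
      have e1 : (∑ y ∈ t, y) (Gc g pe n₀ k) = ∑ n ∈ T, x n (Gc g pe n₀ k) := by
        rw [← hsum, Finset.sum_apply]
      have e3 : ∑ n ∈ T, z n (Gc g pe n₀ k) = v n₀ ⟨k, hk⟩ := by
        rw [Finset.sum_eq_single_of_mem n₀ hn₀T (by
          intro n hn hne
          simp only [hz]
          rw [zf_apply]
          exact if_neg (fun h => hne h.symm))]
        simp only [hz]
        rw [zf_apply, if_pos rfl]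
        simp only [hw]
        exact dif_pos hk
      have e4 : ∑ n ∈ T, x n (Gc g pe n₀ k) =
          ∑ n ∈ T, q n (Gc g pe n₀ k) + ∑ n ∈ T, z n (Gc g pe n₀ k) := by
        rw [← Finset.sum_add_distrib]
        exact Finset.sum_congr rfl (fun n _ => rfl)
      have : (∑ y ∈ t, y) (Gc g pe n₀ k) =
          ∑ n ∈ T, q n (Gc g pe n₀ k) + v n₀ ⟨k, hk⟩ := by rw [e1, e4, e3]
      simp only [AddSubgroup.coe_mk]
      rw [this]
      ring
    exact hv n₀ (⟨∑ y ∈ t, y, hs⟩, T) key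
  refine ⟨Set.range x, Set.countable_range x, ?_, ?_, ?_⟩
  · -- Dense
    rw [dense_iff_inter_open]
    rintro U hU ⟨f, hf⟩
    obtain ⟨I, uo, hIu, hsub⟩ := isOpen_pi_iff.mp hU f hf
    obtain ⟨c, hc⟩ := exists_cond e he f I
    obtain ⟨n, hn⟩ := hcseq c
    refine ⟨x n, hsub ?_, Set.mem_range_self n⟩
    intro i hiI
    have hiI' : i ∈ I := hiI
    have hhits : condHits (cseq n) (e i) := by rw [hn]; exact (hc i hiI').1
    have hzi : z n i = 0 := by
      by_cases hex : ∃ m, g m = i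
      · obtain ⟨m, rfl⟩ := hex
        have hgm : g m = Gc g pe (pe m).1 (pe m).2 := by
          rw [Gc]
          congr 1
          rw [← Prod.mk.eta (p := pe m), Equiv.symm_apply_apply]
        simp only [hz]
        rw [hgm, zf_apply]
        by_cases hcase : (pe m).1 = n
        · rw [if_pos hcase]
          simp only [hw]
          have hnotK : (pe m).2 ∉ K n := by
            simp only [hK, Set.mem_setOf_eq, not_not]
            rw [show Gc g pe n (pe m).2 = g m by rw [← hcase]; exact hgm.symm]
            exact hhits
          exact dif_neg hnotK
        · exact if_neg hcase
      · simp only [hz]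
        exact zf_apply_not_mem g pe w n (not_exists.mp hex)
    have hqi : q n i = f i := by
      rw [hq]
      simp only
      rw [hn]
      exact (hc i hiI').2
    have hxi : x n i = f i := by
      rw [hx]
      simp only [Pi.add_apply]
      rw [hzi, hqi, add_zero]
    rw [hxi]
    exact (hIu i hiI').2
  · -- BooleanIndependent
    intro t ht hsum0 y hy
    exact absurd (show ∑ y ∈ t, y ∈ S by rw [hsum0]; exact S.zero_mem)
      (claim t ht ⟨y, hy⟩)
  · -- avoid S
    intro y hy hyS
    have hle : AddSubgroup.closure (Set.range x) ≤
        (Submodule.span (ZMod 2) (Set.range x)).toAddSubgroup :=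
      (AddSubgroup.closure_le _).mpr Submodule.subset_span
    have hy' : y ∈ Submodule.span (ZMod 2) (Set.range x) := hle hy
    obtain ⟨c, hcsupp, hcsum⟩ := Submodule.mem_span_set.mp hy'
    have hone : ∀ m ∈ c.support, c m = 1 := by
      intro m hm
      have h0 : c m ≠ 0 := Finsupp.mem_support_iff.mp hm
      revert h0
      generalize c m = a
      revert a
      decide
    have hsum' : ∑ m ∈ c.support, m = y := by
      rw [← hcsum, Finsupp.sum]
      exact Finset.sum_congr rfl fun m hm => by rw [hone m hm, one_smul]
    by_contra hy0
    have hne : c.support.Nonempty := by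
      rcases Finset.eq_empty_or_nonempty c.support with h | h
      · exact absurd (show y = 0 by rw [← hsum', h, Finset.sum_empty]) hy0
      · exact h
    exact claim c.support hcsupp hne (hsum' ▸ hyS)
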